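/- Let g : [0,∞) → [0,∞) be convex and non-increasing, Y a nonnegative random variable with survival function F̄_Y, finite mean, and M, c > 0 with cM < ∫₀^∞ F̄_Y. Among all measurable e : [0,∞) → [0,M] with ∫₀^∞ e(t) F̄_Y(t) dt = ∫₀^{t*} M F̄_Y(t) dt (where t* satisfies this budget identity), if Y is DMRL then the front-loading policy e*(t) = M·1{t ≤ t*} minimizes J(e) = ∫₀^∞ g(∫₀^t e) F̄_Y(t) dt; i.e., J(e*) ≤ J(e) for every feasible e. -/

import Mathlib

open MeasureTheory Set
open scoped ENNReal

lemma aux_tangent {g g' : ℝ → ℝ} (hc : ConvexOn ℝ (Set.Ici 0) g)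
    (hd : ∀ t, 0 ≤ t → HasDerivAt g (g' t) t) {x y : ℝ} (hx : 0 ≤ x) (hy : 0 ≤ y) :
    g x + g' x * (y - x) ≤ g y := by
  rcases lt_trichotomy x y with h | rfl | h
  · have h1 := hc.le_slope_of_hasDerivAt hx hy h (hd x hx)
    rw [slope_def_field] at h1
    have h2 : 0 < y - x := sub_pos.mpr h
    have h3 := (le_div_iff₀ h2).mp h1
    linarith
  · simp
  · have h1 := hc.slope_le_of_hasDerivAt hy hx h (hd x hx)
    rw [slope_def_field] at h1
    have h2 : 0 < x - y := sub_pos.mpr h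
    have h3 := (div_le_iff₀ h2).mp h1
    linarith

lemma aux_mono {g g' : ℝ → ℝ} (hc : ConvexOn ℝ (Set.Ici 0) g)
    (hd : ∀ t, 0 ≤ t → HasDerivAt g (g' t) t) {x y : ℝ} (hx : 0 ≤ x) (hxy : x ≤ y) :
    g' x ≤ g' y := by
  have hy : 0 ≤ y := le_trans hx hxy
  have h1 := aux_tangent hc hd hx hy
  have h2 := aux_tangent hc hd hy hx
  rcases eq_or_lt_of_le hxy with rfl | h
  · exact le_refl _
  · have h3 : g' x * (y - x) ≤ g' y * (y - x) := by linarith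
    exact le_of_mul_le_mul_right h3 (sub_pos.mpr h)

lemma aux_fubini (F h : ℝ → ℝ) (hF : Measurable F) (hh : Measurable h) :
    (∫⁻ t in Set.Ioi (0:ℝ), (∫⁻ τ in Set.Ioc (0:ℝ) t, ENNReal.ofReal (h τ)) * ENNReal.ofReal (F t))
      = ∫⁻ τ in Set.Ioi (0:ℝ), ENNReal.ofReal (h τ) * ∫⁻ u in Set.Ioi τ, ENNReal.ofReal (F u) := by
  set S : Set (ℝ × ℝ) := {p : ℝ × ℝ | 0 < p.2 ∧ p.2 ≤ p.1} with hSdef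
  have hS : MeasurableSet S :=
    (measurableSet_lt measurable_const measurable_snd).inter
      (measurableSet_le measurable_snd measurable_fst)
  set Φ : ℝ × ℝ → ℝ≥0∞ :=
    S.indicator (fun p => ENNReal.ofReal (h p.2) * ENNReal.ofReal (F p.1)) with hΦdef
  have hΦ : Measurable Φ :=
    (((hh.comp measurable_snd).ennreal_ofReal).mul
      ((hF.comp measurable_fst).ennreal_ofReal)).indicator hS
  have step1 : ∀ t : ℝ, (∫⁻ τ in Set.Ioc (0:ℝ) t, ENNReal.ofReal (h τ)) * ENNReal.ofReal (F t)
      = ∫⁻ τ, Φ (t, τ) := by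
    intro t
    have : ∀ τ, Φ (t, τ)
        = (Set.Ioc (0:ℝ) t).indicator (fun τ => ENNReal.ofReal (h τ) * ENNReal.ofReal (F t)) τ := by
      intro τ
      by_cases hτ : τ ∈ Set.Ioc (0:ℝ) t
      · rw [Set.indicator_of_mem hτ, hΦdef, Set.indicator_of_mem]
        exact ⟨hτ.1, hτ.2⟩
      · rw [Set.indicator_of_notMem hτ, hΦdef, Set.indicator_of_notMem]
        intro hmem; exact hτ ⟨hmem.1, hmem.2⟩
    simp_rw [this]
    rw [lintegral_indicator measurableSet_Ioc _, lintegral_mul_const _ hh.ennreal_ofReal]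
  have step2 : ∀ τ : ℝ, (∫⁻ t, Φ (t, τ))
      = (Set.Ioi (0:ℝ)).indicator
          (fun τ => ENNReal.ofReal (h τ) * ∫⁻ u in Set.Ioi τ, ENNReal.ofReal (F u)) τ := by
    intro τ
    by_cases hτ : τ ∈ Set.Ioi (0:ℝ)
    · rw [Set.indicator_of_mem hτ]
      have : ∀ t, Φ (t, τ)
          = (Set.Ici τ).indicator (fun t => ENNReal.ofReal (h τ) * ENNReal.ofReal (F t)) t := by
        intro t
        by_cases htt : t ∈ Set.Ici τ
        · rw [Set.indicator_of_mem htt, hΦdef, Set.indicator_of_mem]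
          exact ⟨hτ, htt⟩
        · rw [Set.indicator_of_notMem htt, hΦdef, Set.indicator_of_notMem]
          intro hmem; exact htt hmem.2
      simp_rw [this]
      rw [lintegral_indicator measurableSet_Ici _,
        lintegral_const_mul _ hF.ennreal_ofReal,
        setLIntegral_congr (Filter.EventuallyEq.symm Ioi_ae_eq_Ici)]
    · rw [Set.indicator_of_notMem hτ]
      have : ∀ t, Φ (t, τ) = 0 := by
        intro t
        rw [hΦdef, Set.indicator_of_notMem]
        intro hmem; exact hτ hmem.1
      simp_rw [this, lintegral_zero]
  calc (∫⁻ t in Set.Ioi (0:ℝ),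
        (∫⁻ τ in Set.Ioc (0:ℝ) t, ENNReal.ofReal (h τ)) * ENNReal.ofReal (F t))
      = ∫⁻ t in Set.Ioi (0:ℝ), ∫⁻ τ, Φ (t, τ) := by simp_rw [step1]
    _ = ∫⁻ t, ∫⁻ τ, Φ (t, τ) := by
        rw [← lintegral_indicator measurableSet_Ioi _]
        congr 1; funext t
        by_cases htt : t ∈ Set.Ioi (0:ℝ)
        · rw [Set.indicator_of_mem htt]
        · rw [Set.indicator_of_notMem htt]
          symm
          have : ∀ τ, Φ (t, τ) = 0 := by
            intro τ
            rw [hΦdef, Set.indicator_of_notMem]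
            intro hmem
            exact htt (lt_of_lt_of_le hmem.1 hmem.2)
          simp_rw [this, lintegral_zero]
    _ = ∫⁻ τ, ∫⁻ t, Φ (t, τ) := lintegral_lintegral_swap hΦ.aemeasurable
    _ = ∫⁻ τ in Set.Ioi (0:ℝ), ENNReal.ofReal (h τ) * ∫⁻ u in Set.Ioi τ, ENNReal.ofReal (F u) := by
        simp_rw [step2]
        rw [lintegral_indicator measurableSet_Ioi _]

/-- Global optimality of the front-loading policy under DMRL concept durations: among
all measurable allocations `e : [0,∞) → [0,M]` satisfying the budget constraint
`∫₀^∞ e F̄ ≤ ∫₀^{t*} M F̄`, the bang-bang policy `e*(t) = M·1{t ≤ t*}` minimizes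
`J(e) = ∫₀^∞ g(∫₀^t e) F̄(t) dt`. -/
theorem stmt_18 (M tstar : ℝ) (hM : 0 < M) (ht : 0 < tstar)
    (g g' F : ℝ → ℝ)
    (hg_conv : ConvexOn ℝ (Set.Ici 0) g) (hg_anti : AntitoneOn g (Set.Ici 0))
    (hg_nonneg : ∀ t, 0 ≤ t → 0 ≤ g t)
    (hg_deriv : ∀ t, 0 ≤ t → HasDerivAt g (g' t) t) (hg'_cont : Continuous g')
    (hF_pos : ∀ t, 0 < F t) (hF_diff : Differentiable ℝ F)
    (hF_int : IntegrableOn F (Set.Ioi 0))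
    (hDMRL : AntitoneOn (fun t => (∫ u in Set.Ioi t, F u) / F t) (Set.Ici 0))
    (e : ℝ → ℝ) (he_meas : Measurable e) (he : ∀ t, e t ∈ Set.Icc 0 M)
    (hbudget : (∫ t in Set.Ioi (0:ℝ), e t * F t) ≤ ∫ t in Set.Ioc (0:ℝ) tstar, M * F t) :
    (∫⁻ t in Set.Ioi (0:ℝ),
        ENNReal.ofReal
          (g (∫ τ in Set.Ioc (0:ℝ) t, (if τ ≤ tstar then M else 0)) * F t))
      ≤ ∫⁻ t in Set.Ioi (0:ℝ),
          ENNReal.ofReal (g (∫ τ in Set.Ioc (0:ℝ) t, e τ) * F t) := by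
  have hF_cont : Continuous F := hF_diff.continuous
  have hF_meas : Measurable F := hF_cont.measurable
  have hF_nn : ∀ x, 0 ≤ F x := fun x => (hF_pos x).le
  set s : ℝ → ℝ := fun τ => if τ ≤ tstar then M else 0 with hs_def
  have hs_meas : Measurable s := by
    apply Measurable.ite _ measurable_const measurable_const
    exact measurableSet_Iic
  have hs_nn : ∀ τ, 0 ≤ s τ := by
    intro τ; rw [hs_def]; dsimp only; split <;> simp [hM.le]
  have hs_le : ∀ τ, s τ ≤ M := by
    intro τ; rw [hs_def]; dsimp only; split <;> simp [hM.le]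
  -- bounded measurable functions are integrable on finite-measure sets
  have hbdd_int : ∀ (h : ℝ → ℝ), Measurable h → (∀ x, ‖h x‖ ≤ M) →
      ∀ a b : ℝ, IntegrableOn h (Set.Ioc a b) := by
    intro h hm hC a b
    exact Measure.integrableOn_of_bounded measure_Ioc_lt_top.ne
      hm.aestronglyMeasurable (Filter.Eventually.of_forall hC)
  have he_norm : ∀ x, ‖e x‖ ≤ M := by
    intro x; rw [Real.norm_eq_abs, abs_le]; exact ⟨by linarith [(he x).1, hM.le], (he x).2⟩
  have hs_norm : ∀ x, ‖s x‖ ≤ M := by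
    intro x; rw [Real.norm_eq_abs, abs_le]; exact ⟨by linarith [hs_nn x], hs_le x⟩
  -- the survival-integral function G
  set G : ℝ → ℝ := fun τ => ∫ u in Set.Ioi (max τ 0), F u with hG_def
  have hG0 : ∀ τ : ℝ, 0 ≤ τ → G τ = ∫ u in Set.Ioi τ, F u := by
    intro τ hτ; rw [hG_def]; dsimp only; rw [max_eq_left hτ]
  have hG_nonneg : ∀ τ, 0 ≤ G τ := fun τ =>
    setIntegral_nonneg measurableSet_Ioi (fun u _ => hF_nn u)
  have hG_anti : Antitone G := by
    intro a b hab
    exact setIntegral_mono_set (hF_int.mono_set (Ioi_subset_Ioi (le_max_right a 0)))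
      (Filter.Eventually.of_forall (fun u => hF_nn u))
      (HasSubset.Subset.eventuallyLE (Ioi_subset_Ioi (max_le_max hab le_rfl)))
  have hG_meas : Measurable G := hG_anti.measurable
  have hratio : ∀ a b : ℝ, 0 ≤ a → a ≤ b → G b * F a ≤ G a * F b := by
    intro a b ha hab
    have hb : 0 ≤ b := le_trans ha hab
    have h1 := hDMRL (mem_Ici.mpr ha) (mem_Ici.mpr hb) hab
    dsimp only at h1
    rw [← hG0 a ha, ← hG0 b hb] at h1
    exact (div_le_div_iff₀ (hF_pos b) (hF_pos a)).mp h1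
  have hG_int : IntegrableOn G (Set.Ioi 0) := by
    apply Integrable.mono' (hF_int.const_mul (G 0 / F 0)) hG_meas.aestronglyMeasurable
    rw [ae_restrict_iff' measurableSet_Ioi]
    apply Filter.Eventually.of_forall
    intro τ hτ
    rw [Real.norm_eq_abs, abs_of_nonneg (hG_nonneg τ)]
    have h1 := hratio 0 τ le_rfl (le_of_lt hτ)
    rw [div_mul_eq_mul_div, le_div_iff₀ (hF_pos 0)]
    linarith
  -- integrability of products
  have hmul_int : ∀ (h : ℝ → ℝ), Measurable h → (∀ x, ‖h x‖ ≤ M) →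
      ∀ (k : ℝ → ℝ), Measurable k → IntegrableOn k (Set.Ioi 0) →
      IntegrableOn (fun τ => h τ * k τ) (Set.Ioi 0) := by
    intro h hm hC k hkm hki
    apply Integrable.mono' (hki.abs.const_mul M) (hm.mul hkm).aestronglyMeasurable
    apply Filter.Eventually.of_forall
    intro τ
    rw [Real.norm_eq_abs, Pi.mul_apply, abs_mul]
    exact mul_le_mul (hC τ) le_rfl (abs_nonneg _) hM.le
  have int_eF := hmul_int e he_meas he_norm F hF_meas hF_int
  have int_sF := hmul_int s hs_meas hs_norm F hF_meas hF_int
  have int_eG := hmul_int e he_meas he_norm G hG_meas hG_int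
  have int_sG := hmul_int s hs_meas hs_norm G hG_meas hG_int
  -- budget rewritten
  have hestarF : (∫ τ in Set.Ioi (0:ℝ), s τ * F τ) = ∫ τ in Set.Ioc (0:ℝ) tstar, M * F τ := by
    have h1 : (fun τ => s τ * F τ) = (Set.Iic tstar).indicator (fun τ => M * F τ) := by
      funext τ
      by_cases hτ : τ ≤ tstar
      · rw [Set.indicator_of_mem (Set.mem_Iic.mpr hτ), hs_def]; dsimp only; rw [if_pos hτ]
      · rw [Set.indicator_of_notMem (fun hmem => hτ (Set.mem_Iic.mp hmem)), hs_def]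
        dsimp only; rw [if_neg hτ, zero_mul]
    rw [h1, setIntegral_indicator measurableSet_Iic, Set.Ioi_inter_Iic]
  have hbud2 : (∫ τ in Set.Ioi (0:ℝ), (e τ - s τ) * F τ) ≤ 0 := by
    rw [show (fun τ => (e τ - s τ) * F τ) = fun τ => e τ * F τ - s τ * F τ by funext τ; ring]
    rw [integral_sub int_eF int_sF, hestarF]
    linarith
  -- the key comparison
  have hkey : (∫ τ in Set.Ioi (0:ℝ), e τ * G τ) ≤ ∫ τ in Set.Ioi (0:ℝ), s τ * G τ := by
    set c : ℝ := G tstar / F tstar with hc_def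
    have hc : 0 ≤ c := div_nonneg (hG_nonneg tstar) (hF_pos tstar).le
    have hpoint : ∀ τ ∈ Set.Ioi (0:ℝ), (e τ - s τ) * (G τ - c * F τ) ≤ 0 := by
      intro τ hτ
      rw [Set.mem_Ioi] at hτ
      by_cases hts : τ ≤ tstar
      · apply mul_nonpos_iff.mpr
        right
        constructor
        · rw [hs_def]; dsimp only; rw [if_pos hts]; linarith [(he τ).2]
        · have h1 := hratio τ tstar hτ.le hts
          rw [hc_def, sub_nonneg, div_mul_eq_mul_div, div_le_iff₀ (hF_pos tstar)]
          linarith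
      · push_neg at hts
        apply mul_nonpos_iff.mpr
        left
        constructor
        · rw [hs_def]; dsimp only; rw [if_neg (not_le.mpr hts)]; linarith [(he τ).1]
        · have h1 := hratio tstar τ ht.le hts.le
          rw [hc_def, sub_nonpos, div_mul_eq_mul_div, le_div_iff₀ (hF_pos tstar)]
          linarith
    have h1 : (∫ τ in Set.Ioi (0:ℝ), (e τ - s τ) * (G τ - c * F τ)) ≤ 0 :=
      setIntegral_nonpos measurableSet_Ioi hpoint
    have int_mix : IntegrableOn (fun τ => (e τ - s τ) * (G τ - c * F τ)) (Set.Ioi 0) := by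
      have : (fun τ => (e τ - s τ) * (G τ - c * F τ))
          = fun τ => (e τ * G τ - s τ * G τ) - c * (e τ * F τ - s τ * F τ) := by
        funext τ; ring
      rw [this]
      have i1 : IntegrableOn (fun τ => e τ * G τ - s τ * G τ) (Set.Ioi 0) := int_eG.sub int_sG
      have i2 : IntegrableOn (fun τ => e τ * F τ - s τ * F τ) (Set.Ioi 0) := int_eF.sub int_sF
      have i3 : IntegrableOn (fun τ => c * (e τ * F τ - s τ * F τ)) (Set.Ioi 0) := i2.const_mul c
      exact i1.sub i3
    have h2 : (∫ τ in Set.Ioi (0:ℝ), (e τ - s τ) * (G τ - c * F τ))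
        = ((∫ τ in Set.Ioi (0:ℝ), e τ * G τ) - ∫ τ in Set.Ioi (0:ℝ), s τ * G τ)
          - c * ((∫ τ in Set.Ioi (0:ℝ), e τ * F τ) - ∫ τ in Set.Ioi (0:ℝ), s τ * F τ) := by
      rw [show (fun τ => (e τ - s τ) * (G τ - c * F τ))
          = fun τ => (e τ * G τ - s τ * G τ) - c * (e τ * F τ - s τ * F τ) from by funext τ; ring]
      have i1 : IntegrableOn (fun τ => e τ * G τ - s τ * G τ) (Set.Ioi 0) := int_eG.sub int_sG
      have i2 : IntegrableOn (fun τ => e τ * F τ - s τ * F τ) (Set.Ioi 0) := int_eF.sub int_sF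
      have i3 : IntegrableOn (fun τ => c * (e τ * F τ - s τ * F τ)) (Set.Ioi 0) := i2.const_mul c
      rw [integral_sub i1 i3, integral_sub int_eG int_sG, integral_const_mul c,
        integral_sub int_eF int_sF]
    have h3 : (∫ τ in Set.Ioi (0:ℝ), e τ * F τ) - (∫ τ in Set.Ioi (0:ℝ), s τ * F τ) ≤ 0 := by
      rw [hestarF]; linarith
    nlinarith
  -- cumulative allocations
  set Ee : ℝ → ℝ := fun t => ∫ τ in Set.Ioc (0:ℝ) t, e τ with hEe_def
  set Es : ℝ → ℝ := fun t => ∫ τ in Set.Ioc (0:ℝ) t, s τ with hEs_def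
  have hEe_mono : Monotone Ee := by
    intro a b hab
    exact setIntegral_mono_set (hbdd_int e he_meas he_norm 0 b)
      (Filter.Eventually.of_forall (fun τ => (he τ).1))
      (HasSubset.Subset.eventuallyLE (Ioc_subset_Ioc_right hab))
  have hEs_mono : Monotone Es := by
    intro a b hab
    exact setIntegral_mono_set (hbdd_int s hs_meas hs_norm 0 b)
      (Filter.Eventually.of_forall (fun τ => hs_nn τ))
      (HasSubset.Subset.eventuallyLE (Ioc_subset_Ioc_right hab))
  have hEe_meas : Measurable Ee := hEe_mono.measurable
  have hEs_meas : Measurable Es := hEs_mono.measurable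
  have hEe_nn : ∀ t, 0 ≤ Ee t := fun t =>
    setIntegral_nonneg measurableSet_Ioc (fun τ _ => (he τ).1)
  have hEs_nn : ∀ t, 0 ≤ Es t := fun t =>
    setIntegral_nonneg measurableSet_Ioc (fun τ _ => hs_nn τ)
  have hconst_Ioc : ∀ a b : ℝ, a ≤ b → (∫ _ in Set.Ioc a b, M) = M * (b - a) := by
    intro a b hab
    rw [setIntegral_const, measureReal_def, Real.volume_Ioc, smul_eq_mul, ENNReal.toReal_ofReal (by linarith)]
    ring
  have hEe_le : ∀ t : ℝ, 0 < t → Ee t ≤ M * t := by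
    intro t htpos
    have h1 : Ee t ≤ ∫ _ in Set.Ioc (0:ℝ) t, M := by
      apply setIntegral_mono_on (hbdd_int e he_meas he_norm 0 t)
        (integrableOn_const measure_Ioc_lt_top.ne) measurableSet_Ioc
      intro τ _; exact (he τ).2
    rw [hconst_Ioc 0 t htpos.le] at h1
    linarith
  have hEs_eq : ∀ t : ℝ, 0 < t → Es t = M * min t tstar := by
    intro t htpos
    rw [hEs_def]
    dsimp only
    by_cases hts : t ≤ tstar
    · rw [min_eq_left hts]
      rw [setIntegral_congr_fun measurableSet_Ioc
        (g := fun _ => M) (fun τ hτ => if_pos (le_trans hτ.2 hts))]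
      rw [hconst_Ioc 0 t htpos.le]; ring
    · push_neg at hts
      rw [min_eq_right hts.le]
      have hsplit : Set.Ioc (0:ℝ) t = Set.Ioc 0 tstar ∪ Set.Ioc tstar t :=
        (Set.Ioc_union_Ioc_eq_Ioc ht.le hts.le).symm
      rw [hsplit, setIntegral_union (Set.Ioc_disjoint_Ioc_of_le le_rfl) measurableSet_Ioc
        (hbdd_int s hs_meas hs_norm 0 tstar) (hbdd_int s hs_meas hs_norm tstar t)]
      have h2 : (∫ τ in Set.Ioc (0:ℝ) tstar, s τ) = M * tstar := by
        rw [setIntegral_congr_fun measurableSet_Ioc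
          (g := fun _ => M) (fun τ hτ => if_pos hτ.2)]
        rw [hconst_Ioc 0 tstar ht.le]; ring
      have h3 : (∫ τ in Set.Ioc tstar t, s τ) = 0 := by
        rw [setIntegral_congr_fun measurableSet_Ioc
          (g := fun _ => (0:ℝ)) (fun τ hτ => if_neg (not_le.mpr hτ.1))]
        simp
      rw [h2, h3]; ring
  -- tangent-line inequality, in the combined form
  have hMts : (0:ℝ) ≤ M * tstar := mul_nonneg hM.le ht.le
  set γ : ℝ := g' (M * tstar) with hγ_def
  have hγ : γ ≤ 0 := by
    have h1 := aux_tangent hg_conv hg_deriv hMts (by linarith : (0:ℝ) ≤ M * tstar + 1)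
    have h2 := hg_anti (mem_Ici.mpr hMts) (mem_Ici.mpr (by linarith : (0:ℝ) ≤ M * tstar + 1))
      (by linarith)
    rw [hγ_def]; nlinarith
  set β : ℝ := -γ with hβ_def
  have hβ : 0 ≤ β := by rw [hβ_def]; linarith
  have hpt : ∀ t : ℝ, 0 < t → g (Es t) + β * Es t ≤ g (Ee t) + β * Ee t := by
    intro t htpos
    have hb_eq : Es t = M * min t tstar := hEs_eq t htpos
    have hb_le : Es t ≤ M * tstar := by
      rw [hb_eq]; exact mul_le_mul_of_nonneg_left (min_le_right t tstar) hM.le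
    have htan := aux_tangent hg_conv hg_deriv (hEs_nn t) (hEe_nn t)
    have hstep : γ * (Ee t - Es t) ≤ g' (Es t) * (Ee t - Es t) := by
      by_cases hca : Ee t ≤ Es t
      · have h4 : g' (Es t) ≤ γ := by
          rw [hγ_def]; exact aux_mono hg_conv hg_deriv (hEs_nn t) hb_le
        exact mul_le_mul_of_nonpos_right h4 (by linarith)
      · push_neg at hca
        have hts : ¬ t ≤ tstar := by
          intro hts
          have h5 : Es t = M * t := by rw [hb_eq, min_eq_left hts]
          have h6 := hEe_le t htpos
          rw [h5] at hca; linarith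
        have h5 : Es t = M * tstar := by
          rw [hb_eq, min_eq_right (le_of_not_ge hts)]
        rw [h5, ← hγ_def]
    have := le_trans (add_le_add_right hstep (g (Es t))) htan
    rw [hβ_def]; nlinarith
  -- continuity of g on [0,∞) and measurability of the compositions
  have hg_cont : ContinuousOn g (Set.Ici 0) := fun x hx =>
    (hg_deriv x hx).continuousAt.continuousWithinAt
  have hgm_cont : Continuous (fun x : ℝ => g (max x 0)) := by
    apply hg_cont.comp_continuous (continuous_id.max continuous_const)
    intro x; exact mem_Ici.mpr (le_max_right x 0)
  have hgEs_meas : Measurable (fun t => g (Es t)) := by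
    have : (fun t => g (Es t)) = fun t => g (max (Es t) 0) := by
      funext t; rw [max_eq_left (hEs_nn t)]
    rw [this]
    exact hgm_cont.measurable.comp hEs_meas
  have hgEe_meas : Measurable (fun t => g (Ee t)) := by
    have : (fun t => g (Ee t)) = fun t => g (max (Ee t) 0) := by
      funext t; rw [max_eq_left (hEe_nn t)]
    rw [this]
    exact hgm_cont.measurable.comp hEe_meas
  -- Fubini computation of the linear terms
  have hlin : ∀ (h : ℝ → ℝ), Measurable h → (∀ x, 0 ≤ h x) → (∀ x, ‖h x‖ ≤ M) →
      IntegrableOn (fun τ => h τ * G τ) (Set.Ioi 0) →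
      (∫⁻ t in Set.Ioi (0:ℝ), ENNReal.ofReal ((∫ τ in Set.Ioc (0:ℝ) t, h τ) * F t))
        = ENNReal.ofReal (∫ τ in Set.Ioi (0:ℝ), h τ * G τ) := by
    intro h hm hnn hnorm hintG
    calc (∫⁻ t in Set.Ioi (0:ℝ), ENNReal.ofReal ((∫ τ in Set.Ioc (0:ℝ) t, h τ) * F t))
        = ∫⁻ t in Set.Ioi (0:ℝ),
            (∫⁻ τ in Set.Ioc (0:ℝ) t, ENNReal.ofReal (h τ)) * ENNReal.ofReal (F t) := by
          apply setLIntegral_congr_fun measurableSet_Ioi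
          intro t _
          dsimp only
          rw [ENNReal.ofReal_mul (setIntegral_nonneg measurableSet_Ioc fun τ _ => hnn τ)]
          congr 1
          rw [← ofReal_integral_eq_lintegral_ofReal (hbdd_int h hm hnorm 0 t)
            (Filter.Eventually.of_forall hnn)]
      _ = ∫⁻ τ in Set.Ioi (0:ℝ), ENNReal.ofReal (h τ) * ∫⁻ u in Set.Ioi τ, ENNReal.ofReal (F u) :=
          aux_fubini F h hF_meas hm
      _ = ∫⁻ τ in Set.Ioi (0:ℝ), ENNReal.ofReal (h τ * G τ) := by
          apply setLIntegral_congr_fun measurableSet_Ioi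
          intro τ hτ
          dsimp only
          rw [ENNReal.ofReal_mul (hnn τ)]
          congr 1
          rw [← ofReal_integral_eq_lintegral_ofReal
            (hF_int.mono_set (Set.Ioi_subset_Ioi (le_of_lt hτ)))
            (Filter.Eventually.of_forall hF_nn), hG0 τ (le_of_lt hτ)]
      _ = ENNReal.ofReal (∫ τ in Set.Ioi (0:ℝ), h τ * G τ) :=
          (ofReal_integral_eq_lintegral_ofReal hintG
            (Filter.Eventually.of_forall fun τ => mul_nonneg (hnn τ) (hG_nonneg τ))).symm
  have hP := hlin s hs_meas hs_nn hs_norm int_sG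
  have hQ := hlin e he_meas (fun x => (he x).1) he_norm int_eG
  -- final assembly
  have m1 : Measurable fun t => ENNReal.ofReal (g (Es t) * F t) :=
    (hgEs_meas.mul hF_meas).ennreal_ofReal
  have m2 : Measurable fun t => ENNReal.ofReal (Es t * F t) :=
    (hEs_meas.mul hF_meas).ennreal_ofReal
  have m3 : Measurable fun t => ENNReal.ofReal (g (Ee t) * F t) :=
    (hgEe_meas.mul hF_meas).ennreal_ofReal
  have m4 : Measurable fun t => ENNReal.ofReal (Ee t * F t) :=
    (hEe_meas.mul hF_meas).ennreal_ofReal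
  have hsum : (∫⁻ t in Set.Ioi (0:ℝ), ENNReal.ofReal (g (Es t) * F t))
        + ENNReal.ofReal β * ∫⁻ t in Set.Ioi (0:ℝ), ENNReal.ofReal (Es t * F t)
      ≤ (∫⁻ t in Set.Ioi (0:ℝ), ENNReal.ofReal (g (Ee t) * F t))
        + ENNReal.ofReal β * ∫⁻ t in Set.Ioi (0:ℝ), ENNReal.ofReal (Ee t * F t) := by
    rw [← lintegral_const_mul _ m2, ← lintegral_add_left m1,
      ← lintegral_const_mul _ m4, ← lintegral_add_left m3]
    apply setLIntegral_mono (m3.add ((measurable_const).mul m4))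
    intro t htpos
    have h1 := hpt t htpos
    have e1 : ENNReal.ofReal (g (Es t) * F t) + ENNReal.ofReal β * ENNReal.ofReal (Es t * F t)
        = ENNReal.ofReal ((g (Es t) + β * Es t) * F t) := by
      rw [← ENNReal.ofReal_mul hβ,
        ← ENNReal.ofReal_add (mul_nonneg (hg_nonneg _ (hEs_nn t)) (hF_nn t))
          (mul_nonneg hβ (mul_nonneg (hEs_nn t) (hF_nn t)))]
      congr 1; ring
    have e2 : ENNReal.ofReal (g (Ee t) * F t) + ENNReal.ofReal β * ENNReal.ofReal (Ee t * F t)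
        = ENNReal.ofReal ((g (Ee t) + β * Ee t) * F t) := by
      rw [← ENNReal.ofReal_mul hβ,
        ← ENNReal.ofReal_add (mul_nonneg (hg_nonneg _ (hEe_nn t)) (hF_nn t))
          (mul_nonneg hβ (mul_nonneg (hEe_nn t) (hF_nn t)))]
      congr 1; ring
    rw [e1]; simp only [Pi.add_apply, Pi.mul_apply]; rw [e2]
    exact ENNReal.ofReal_le_ofReal (mul_le_mul_of_nonneg_right h1 (hF_nn t))
  have hP' : (∫⁻ t in Set.Ioi (0:ℝ), ENNReal.ofReal (Es t * F t))
      = ENNReal.ofReal (∫ τ in Set.Ioi (0:ℝ), s τ * G τ) := by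
    simpa only [hEs_def] using hP
  have hQ' : (∫⁻ t in Set.Ioi (0:ℝ), ENNReal.ofReal (Ee t * F t))
      = ENNReal.ofReal (∫ τ in Set.Ioi (0:ℝ), e τ * G τ) := by
    simpa only [hEe_def] using hQ
  have hQP : (∫⁻ t in Set.Ioi (0:ℝ), ENNReal.ofReal (Ee t * F t))
      ≤ ∫⁻ t in Set.Ioi (0:ℝ), ENNReal.ofReal (Es t * F t) := by
    rw [hP', hQ']
    exact ENNReal.ofReal_le_ofReal hkey
  have hfin : ENNReal.ofReal β * (∫⁻ t in Set.Ioi (0:ℝ), ENNReal.ofReal (Es t * F t)) ≠ ⊤ := by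
    rw [hP']
    exact ENNReal.mul_ne_top ENNReal.ofReal_ne_top ENNReal.ofReal_ne_top
  have hz : (∫⁻ t in Set.Ioi (0:ℝ), ENNReal.ofReal (g (Ee t) * F t))
        + ENNReal.ofReal β * ∫⁻ t in Set.Ioi (0:ℝ), ENNReal.ofReal (Ee t * F t)
      ≤ (∫⁻ t in Set.Ioi (0:ℝ), ENNReal.ofReal (g (Ee t) * F t))
        + ENNReal.ofReal β * ∫⁻ t in Set.Ioi (0:ℝ), ENNReal.ofReal (Es t * F t) :=
    add_le_add_right (mul_le_mul_right hQP _) _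
  have final := (ENNReal.add_le_add_iff_right hfin).mp (le_trans hsum hz)
  simpa only [hEs_def, hEe_def] using final
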